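/- Let μ, ν > 0 and δ > μ²/(4ν). Let ρ_ε be as above with 0 < ε < δ/ν − μ²/(4ν²) suitably small, and let u solve u' = u(μ − νu) − δρ_ε(u), u(0) = μ/ν. Then u is non-increasing and liminf_{t→∞} u(t) ≤ ε. -/

import Mathlib

open Filter Set Topology NNReal

/-- With the regularized threshold and supercritical harvesting, the solution
starting from `μ/ν` is non-increasing and `liminf u ≤ ε`. -/
theorem stmt_17 (μ ν δ ε : ℝ) (hν : 0 < ν) (hμ : 0 < μ)
    (hδ : μ ^ 2 / (4 * ν) < δ) (hε0 : 0 < ε)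
    (hεsmall : ε < δ / ν - μ ^ 2 / (4 * ν ^ 2))
    (ρ : ℝ → ℝ) (hρC1 : ContDiff ℝ 1 ρ) (hρmono : Monotone ρ)
    (hρ0 : ∀ s : ℝ, s ≤ 0 → ρ s = 0) (hρ1 : ∀ s : ℝ, ε ≤ s → ρ s = 1)
    (u : ℝ → ℝ)
    (hu : ∀ t : ℝ, 0 ≤ t → HasDerivAt u (u t * (μ - ν * u t) - δ * ρ (u t)) t)
    (h0 : u 0 = μ / ν) :
    AntitoneOn u (Set.Ici 0) ∧ Filter.liminf u atTop ≤ ε := by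
  have hν4 : (0:ℝ) < 4 * ν := by linarith
  have hδ0 : 0 < δ := lt_trans (by positivity) hδ
  set F : ℝ → ℝ := fun x => x * (μ - ν * x) - δ * ρ x with hFdef
  have hFC1 : ContDiff ℝ 1 F := by
    apply ContDiff.sub
    · exact contDiff_id.mul (contDiff_const.sub (contDiff_const.mul contDiff_id))
    · exact contDiff_const.mul hρC1
  have hFcont : Continuous F := hFC1.continuous
  have hρ_nonneg : ∀ x : ℝ, 0 ≤ ρ x := by
    intro x
    rcases le_or_gt x 0 with h | h
    · exact (hρ0 x h).ge
    · have := hρmono h.le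
      rwa [hρ0 0 le_rfl] at this
  have hρ_le_one : ∀ x : ℝ, ρ x ≤ 1 := by
    intro x
    rcases le_or_gt ε x with h | h
    · exact (hρ1 x h).le
    · have := hρmono h.le
      rwa [hρ1 ε le_rfl] at this
  have hquad : ∀ x : ℝ, x * (μ - ν * x) ≤ μ ^ 2 / (4 * ν) := by
    intro x
    rw [le_div_iff₀ hν4]
    nlinarith [sq_nonneg (μ - 2 * ν * x)]
  have hFub : ∀ x : ℝ, ε ≤ x → F x ≤ μ ^ 2 / (4 * ν) - δ := by
    intro x hx
    show x * (μ - ν * x) - δ * ρ x ≤ _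
    rw [hρ1 x hx, mul_one]
    have := hquad x
    linarith
  have hFeps_neg : ∀ x : ℝ, ε ≤ x → F x < 0 := fun x hx =>
    lt_of_le_of_lt (hFub x hx) (by linarith)
  have hFup : ∀ x : ℝ, μ / ν ≤ x → F x ≤ 0 := by
    intro x hx
    have hx0 : (0:ℝ) < x := lt_of_lt_of_le (by positivity) hx
    have h1 : μ ≤ x * ν := (div_le_iff₀ hν).mp hx
    have h2 : x * (μ - ν * x) ≤ 0 := by nlinarith
    have h3 := hρ_nonneg x
    show x * (μ - ν * x) - δ * ρ x ≤ 0
    nlinarith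
  have hF0 : F 0 = 0 := by
    show 0 * (μ - ν * 0) - δ * ρ 0 = 0
    rw [hρ0 0 le_rfl]; ring
  have hμν0 : (0:ℝ) < μ / ν := by positivity
  -- the set of equilibria in [0, μ/ν], and its supremum a
  set S : Set ℝ := Icc (0:ℝ) (μ / ν) ∩ F ⁻¹' {0} with hSdef
  have hS_comp : IsCompact S := isCompact_Icc.inter_right (isClosed_singleton.preimage hFcont)
  have hS_ne : S.Nonempty := ⟨0, ⟨le_rfl, hμν0.le⟩, hF0⟩
  set a := sSup S with hadef
  have haS : a ∈ S := hS_comp.sSup_mem hS_ne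
  have ha0 : 0 ≤ a := haS.1.1
  have haub : a ≤ μ / ν := haS.1.2
  have hFa : F a = 0 := haS.2
  have ha_lt_eps : a < ε := by
    by_contra h
    push_neg at h
    exact absurd hFa (hFeps_neg a h).ne
  have hmax : ∀ x ∈ S, x ≤ a := fun x hx => le_csSup hS_comp.bddAbove hx
  have hFμν : F (μ / ν) ≤ 0 := hFup _ le_rfl
  have hFmid : ∀ x ∈ Icc a (μ / ν), F x ≤ 0 := by
    intro x hx
    by_contra h
    push_neg at h
    obtain ⟨w, hw, hFw⟩ : (0:ℝ) ∈ F '' Icc x (μ / ν) := by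
      apply intermediate_value_Icc' hx.2 hFcont.continuousOn
      exact ⟨hFμν, h.le⟩
    have hwS : w ∈ S := ⟨⟨le_trans (le_trans ha0 hx.1) hw.1, hw.2⟩, hFw⟩
    have hwa := hmax w hwS
    have hxw : x = w := le_antisymm hw.1 (le_trans hwa hx.1)
    rw [hxw, hFw] at h
    exact lt_irrefl 0 h
  have hucA : ∀ t : ℝ, 0 ≤ t → ContinuousAt u t := fun t ht => (hu t ht).continuousAt
  have huc : ContinuousOn u (Ici 0) := fun t ht => (hucA t ht).continuousWithinAt
  -- upper invariance : u t ≤ μ/ν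
  have hup : ∀ t : ℝ, 0 ≤ t → u t ≤ μ / ν := by
    intro t1 ht1
    by_contra h
    push_neg at h
    have ht1pos : 0 < t1 := by
      rcases ht1.lt_or_eq with h' | h'
      · exact h'
      · rw [← h', h0] at h; exact absurd h (lt_irrefl _)
    set A := Icc (0:ℝ) t1 ∩ u ⁻¹' Iic (μ / ν) with hAdef
    have hA_closed : IsClosed A :=
      (huc.mono (Icc_subset_Ici_self)).preimage_isClosed_of_isClosed isClosed_Icc isClosed_Iic
    have hA_comp : IsCompact A := isCompact_Icc.of_isClosed_subset hA_closed inter_subset_left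
    have hA_ne : A.Nonempty := ⟨0, ⟨le_rfl, ht1⟩, by simp [h0]⟩
    set T := sSup A with hTdef
    have hTA : T ∈ A := hA_comp.sSup_mem hA_ne
    have hT0 : 0 ≤ T := hTA.1.1
    have hTle : u T ≤ μ / ν := hTA.2
    have hTlt : T < t1 := lt_of_le_of_ne hTA.1.2 (fun he => by rw [he] at hTle; linarith)
    have hgt : ∀ t, T < t → t ≤ t1 → μ / ν < u t := by
      intro t h1 h2
      by_contra hle
      push_neg at hle
      exact absurd (le_csSup hA_comp.bddAbove ⟨⟨le_trans hT0 h1.le, h2⟩, hle⟩) (not_le.mpr h1)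
    have hanti : AntitoneOn u (Icc T t1) := by
      apply antitoneOn_of_deriv_nonpos (convex_Icc T t1)
      · exact huc.mono (fun x hx => le_trans hT0 hx.1)
      · intro x hx
        rw [interior_Icc] at hx
        exact (hu x (hT0.trans hx.1.le)).differentiableAt.differentiableWithinAt
      · intro x hx
        rw [interior_Icc] at hx
        rw [(hu x (hT0.trans hx.1.le)).deriv]
        exact hFup (u x) (hgt x hx.1 hx.2.le).le
    have := hanti (left_mem_Icc.mpr hTlt.le) (right_mem_Icc.mpr hTlt.le) hTlt.le
    have := hgt t1 hTlt le_rfl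
    linarith
  -- lower invariance : a ≤ u t, via uniqueness of ODE solutions
  have hlo : ∀ t : ℝ, 0 ≤ t → a ≤ u t := by
    intro t1 ht1
    by_contra h
    push_neg at h
    have ht1pos : 0 < t1 := by
      rcases ht1.lt_or_eq with h' | h'
      · exact h'
      · rw [← h', h0] at h; linarith
    set A := Icc (0:ℝ) t1 ∩ u ⁻¹' Ici a with hAdef
    have hA_closed : IsClosed A :=
      (huc.mono (Icc_subset_Ici_self)).preimage_isClosed_of_isClosed isClosed_Icc isClosed_Ici
    have hA_comp : IsCompact A := isCompact_Icc.of_isClosed_subset hA_closed inter_subset_left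
    have hA_ne : A.Nonempty := ⟨0, ⟨le_rfl, ht1⟩, by simp [h0, le_trans haub (le_refl _), haub]⟩
    set T := sSup A with hTdef
    have hTA : T ∈ A := hA_comp.sSup_mem hA_ne
    have hT0 : 0 ≤ T := hTA.1.1
    have hTge : a ≤ u T := hTA.2
    have hTlt : T < t1 := lt_of_le_of_ne hTA.1.2 (fun he => by rw [he] at hTge; linarith)
    have hlt : ∀ t, T < t → t ≤ t1 → u t < a := by
      intro t h1 h2
      by_contra hle
      push_neg at hle
      exact absurd (le_csSup hA_comp.bddAbove ⟨⟨le_trans hT0 h1.le, h2⟩, hle⟩) (not_le.mpr h1)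
    have hTeq : u T = a := by
      refine le_antisymm ?_ hTge
      have htend : Tendsto u (𝓝[>] T) (𝓝 (u T)) :=
        ((hucA T hT0).continuousWithinAt)
      apply le_of_tendsto htend
      filter_upwards [Ioo_mem_nhdsGT_of_mem (left_mem_Ico.mpr hTlt)] with t ht
      exact (hlt t ht.1 ht.2.le).le
    -- lower bound on u over [T, t1]
    have hconT : ContinuousOn u (Icc T t1) := huc.mono (fun x hx => le_trans hT0 hx.1)
    obtain ⟨x₀, hx₀mem, hx₀min⟩ :=
      isCompact_Icc.exists_isMinOn (nonempty_Icc.mpr hTlt.le) hconT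
    set m : ℝ := min (u x₀) a with hmdef
    set s : Set ℝ := Icc m (μ / ν) with hsdef
    -- F is Lipschitz on s
    have hfc : Continuous fun x => fderiv ℝ F x := hFC1.continuous_fderiv one_ne_zero
    obtain ⟨C, hC⟩ :=
      (isCompact_Icc (a := m) (b := μ / ν)).exists_bound_of_continuousOn hfc.continuousOn
    set K : ℝ≥0 := ⟨max C 0, le_max_right _ _⟩ with hKdef
    have hlip : LipschitzOnWith K F s := by
      apply Convex.lipschitzOnWith_of_nnnorm_fderiv_le
        (fun x _ => (hFC1.differentiable one_ne_zero).differentiableAt) ?_ (convex_Icc _ _)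
      intro x hx
      rw [← NNReal.coe_le_coe, coe_nnnorm]
      exact (hC x hx).trans (le_max_left C 0)
    have hmem : ∀ t ∈ Ico T t1, u t ∈ s := by
      intro t ht
      refine ⟨le_trans (min_le_left _ _) (hx₀min ⟨ht.1, ht.2.le⟩), hup t (hT0.trans ht.1)⟩
    have key := ODE_solution_unique_of_mem_Icc_right
      (v := fun _ x => F x) (s := fun _ => s) (K := K)
      (f := u) (g := fun _ => a) (a := T) (b := t1)
      (fun _ _ => hlip)
      hconT
      (fun t ht => (hu t (hT0.trans ht.1)).hasDerivWithinAt)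
      hmem
      continuousOn_const
      (fun t _ => by simpa [hFa] using (hasDerivWithinAt_const t (Ici t) a))
      (fun t _ => ⟨min_le_right _ _, haub⟩)
      hTeq
    have := key (right_mem_Icc.mpr hTlt.le)
    simp only at this
    rw [this] at h
    exact lt_irrefl a h
  -- antitonicity on Ici 0
  have hanti : AntitoneOn u (Ici 0) := by
    apply antitoneOn_of_deriv_nonpos (convex_Ici 0) huc
    · intro x hx
      rw [interior_Ici] at hx
      exact (hu x (le_of_lt hx)).differentiableAt.differentiableWithinAt
    · intro x hx
      rw [interior_Ici] at hx
      rw [(hu x (le_of_lt hx)).deriv]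
      exact hFmid (u x) ⟨hlo x hx.le, hup x hx.le⟩
  refine ⟨hanti, ?_⟩
  -- there is a time t0 ≥ 0 with u t0 ≤ ε
  set c : ℝ := δ - μ ^ 2 / (4 * ν) with hcdef
  have hc : 0 < c := by simp only [hcdef]; linarith
  obtain ⟨t0, ht0, hut0⟩ : ∃ t0 : ℝ, 0 ≤ t0 ∧ u t0 ≤ ε := by
    by_contra hcon
    push_neg at hcon
    have hgt : ∀ t : ℝ, 0 ≤ t → ε < u t := fun t ht => hcon t ht
    have hg_anti : AntitoneOn (fun t => u t + c * t) (Ici 0) := by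
      apply antitoneOn_of_deriv_nonpos (convex_Ici 0)
      · exact huc.add (continuous_const.mul continuous_id).continuousOn
      · intro x hx
        rw [interior_Ici] at hx
        exact ((hu x hx.le).add ((hasDerivAt_id x).const_mul c)).differentiableAt.differentiableWithinAt
      · intro x hx
        rw [interior_Ici] at hx
        have hd : HasDerivAt (fun t => u t + c * t) (F (u x) + c) x := by
          have := (hu x hx.le).add ((hasDerivAt_id x).const_mul c)
          rw [mul_one] at this
          exact this
        rw [hd.deriv]
        have := hFub (u x) (hgt x hx.le).le
        simp only [hcdef]
        linarith
    set T : ℝ := max 1 ((μ / ν - ε) / c) with hTdef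
    have hT0 : (0:ℝ) ≤ T := le_trans zero_le_one (le_max_left _ _)
    have hstep := hg_anti (self_mem_Ici) (mem_Ici.mpr hT0) hT0
    simp only [mul_zero, add_zero, h0] at hstep
    have hcT : μ / ν - ε ≤ c * T := by
      have h1 : (μ / ν - ε) / c ≤ T := le_max_right _ _
      have h2 := (div_le_iff₀ hc).mp h1
      linarith [mul_comm T c]
    have : u T ≤ ε := by linarith
    exact absurd this (not_le.mpr (hgt T hT0))
  -- conclude liminf ≤ ε
  have hev : ∀ᶠ t in atTop, u t ≤ ε := by
    filter_upwards [eventually_ge_atTop t0] with t ht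
    exact le_trans (hanti (mem_Ici.mpr ht0) (mem_Ici.mpr (ht0.trans ht)) ht) hut0
  have hbd : IsBoundedUnder (· ≥ ·) atTop u := by
    apply isBoundedUnder_of_eventually_ge (a := a)
    filter_upwards [eventually_ge_atTop (0:ℝ)] with t ht
    exact hlo t ht
  have hcob : IsCoboundedUnder (· ≥ ·) atTop (fun _ : ℝ => ε) :=
    isCoboundedUnder_ge_of_le atTop (x := ε) (fun _ => le_rfl)
  calc liminf u atTop ≤ liminf (fun _ => ε) atTop := liminf_le_liminf hev hbd hcob
    _ = ε := liminf_const ε
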